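/- Let q be odd and ψ a nontrivial additive character of F_q. For a, b, c ∈ F_q, the sum of ψ(-ax - by - cz) over all nonzero triples (x,y,z) ∈ F_q³ satisfying y² = xz equals: q² - 1 if a = b = c = 0; -1 if b² - 4ac = 0 and (a,c) ≠ (0,0); q - 1 if b² - 4ac is a nonzero square in F_q; and -q - 1 if b² - 4ac is a nonsquare in F_q. -/

import Mathlib

open scoped Classical
open Finset

section Aux

variable {F : Type*} [Field F] [Fintype F]

private noncomputable def qchar (F : Type*) [Field F] [Fintype F] [DecidableEq F] :
    MulChar F ℂ :=
  (quadraticChar F).ringHomComp (Int.castRingHom ℂ)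

private lemma qchar_apply (u : F) : qchar F u = ((quadraticChar F u : ℤ) : ℂ) := rfl

private lemma qchar_sq (u : F) (hu : u ≠ 0) : qchar F u * qchar F u = 1 := by
  rw [qchar_apply, ← Int.cast_mul, ← pow_two, quadraticChar_sq_one hu, Int.cast_one]

private lemma qchar_inv (u : F) : qchar F u⁻¹ = qchar F u := by
  rcases eq_or_ne u 0 with rfl | hu
  · simp
  · have h1 : qchar F u * qchar F u⁻¹ = 1 := by
      rw [← map_mul, mul_inv_cancel₀ hu, map_one]
    calc qchar F u⁻¹ = (qchar F u * qchar F u) * qchar F u⁻¹ := by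
          rw [qchar_sq u hu, one_mul]
      _ = qchar F u * (qchar F u * qchar F u⁻¹) := by ring
      _ = qchar F u := by rw [h1, mul_one]

private lemma sum_lin (ψ : AddChar F ℂ) (hψ : ψ ≠ 1) (t : F) :
    ∑ z : F, ψ (t * z) = if t = 0 then (Fintype.card F : ℂ) else 0 := by
  have := AddChar.sum_mulShift (ψ := ψ) t (AddChar.IsPrimitive.of_ne_one hψ)
  simpa [mul_comm] using this

private lemma gauss_shift (ψ : AddChar F ℂ) (k : F) (hk : k ≠ 0) :
    gaussSum (qchar F) (ψ.mulShift k) = qchar F k * gaussSum (qchar F) ψ := by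
  have h : qchar F k * gaussSum (qchar F) (ψ.mulShift k) = gaussSum (qchar F) ψ :=
    gaussSum_mulShift (qchar F) ψ (Units.mk0 k hk)
  have h2 := qchar_sq k hk
  calc gaussSum (qchar F) (ψ.mulShift k)
      = (qchar F k * qchar F k) * gaussSum (qchar F) (ψ.mulShift k) := by rw [h2, one_mul]
    _ = qchar F k * (qchar F k * gaussSum (qchar F) (ψ.mulShift k)) := by ring
    _ = qchar F k * gaussSum (qchar F) ψ := by rw [h]

private lemma sum_quad (hF : ringChar F ≠ 2) (ψ : AddChar F ℂ) (hψ : ψ ≠ 1)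
    (u : F) (hu : u ≠ 0) :
    ∑ y : F, ψ (u * y ^ 2) = qchar F u * gaussSum (qchar F) ψ := by
  have key : ∑ y : F, ψ (u * y ^ 2)
      = ∑ t : F, ∑ _y ∈ univ.filter (fun y : F => y ^ 2 = t), ψ (u * t) := by
    rw [Finset.sum_fiberwise_of_maps_to' (fun y _ => mem_univ ((y : F) ^ 2))
      (fun t => ψ (u * t))]
  rw [key]
  have card_eq : ∀ t : F,
      ((univ.filter (fun y : F => y ^ 2 = t)).card : ℂ) = ((quadraticChar F t : ℤ) : ℂ) + 1 := by
    intro t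
    have h := quadraticChar_card_sqrts hF t
    rw [Set.toFinset_setOf] at h
    exact_mod_cast congrArg (fun n : ℤ => (n : ℂ)) h
  calc ∑ t : F, ∑ _y ∈ univ.filter (fun y : F => y ^ 2 = t), ψ (u * t)
      = ∑ t : F, (((univ.filter (fun y : F => y ^ 2 = t)).card : ℂ)) * ψ (u * t) := by
        simp [Finset.sum_const, nsmul_eq_mul]
    _ = ∑ t : F, (qchar F t + 1) * ψ (u * t) := by
        refine Finset.sum_congr rfl fun t _ => ?_
        rw [card_eq t, qchar_apply]
    _ = (∑ t : F, qchar F t * ψ (u * t)) + ∑ t : F, ψ (u * t) := by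
        rw [← Finset.sum_add_distrib]; refine Finset.sum_congr rfl fun t _ => ?_; ring
    _ = gaussSum (qchar F) (ψ.mulShift u) + 0 := by
        rw [sum_lin ψ hψ u, if_neg hu]
        congr 1
    _ = qchar F u * gaussSum (qchar F) ψ := by rw [add_zero, gauss_shift ψ u hu]

end Aux

section Aux2
variable {F : Type*} [Field F] [Fintype F]

private lemma sum_quad_lin (hF : ringChar F ≠ 2) (ψ : AddChar F ℂ) (hψ : ψ ≠ 1)
    (u b : F) (hu : u ≠ 0) :
    ∑ y : F, ψ (u * y ^ 2 - b * y)
      = ψ (-(b ^ 2) / (4 * u)) * (qchar F u * gaussSum (qchar F) ψ) := by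
  have h2 : (2 : F) ≠ 0 := Ring.two_ne_zero hF
  have h4 : (4 : F) ≠ 0 := by
    have : (4 : F) = 2 * 2 := by norm_num
    rw [this]; exact mul_ne_zero h2 h2
  have key : ∑ y : F, ψ (u * y ^ 2 - b * y)
      = ∑ y : F, ψ (u * y ^ 2 + -(b ^ 2) / (4 * u)) := by
    refine (Fintype.sum_equiv (Equiv.addRight (b / (2 * u))) _ _ fun y => ?_).symm
    congr 1
    simp only [Equiv.coe_addRight]
    field_simp
    ring
  rw [key]
  calc ∑ y : F, ψ (u * y ^ 2 + -(b ^ 2) / (4 * u))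
      = ∑ y : F, ψ (u * y ^ 2) * ψ (-(b ^ 2) / (4 * u)) := by
        refine Finset.sum_congr rfl fun y _ => ?_
        rw [AddChar.map_add_eq_mul]
    _ = (∑ y : F, ψ (u * y ^ 2)) * ψ (-(b ^ 2) / (4 * u)) := by rw [← Finset.sum_mul]
    _ = _ := by rw [sum_quad hF ψ hψ u hu]; ring

end Aux2

theorem stmt1 {F : Type*} [Field F] [Fintype F] (hq : Odd (Fintype.card F))
    (ψ : AddChar F ℂ) (hψ : ψ ≠ 1) (a b c : F) :
    (∑ x : F, ∑ y : F, ∑ z : F,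
        if y ^ 2 = x * z ∧ (x, y, z) ≠ ((0 : F), (0 : F), (0 : F))
        then ψ (-(a * x) - b * y - c * z) else 0) =
      if a = 0 ∧ b = 0 ∧ c = 0 then (Fintype.card F : ℂ) ^ 2 - 1
      else if b ^ 2 - 4 * a * c = 0 ∧ (a, c) ≠ ((0 : F), (0 : F)) then -1
      else if IsSquare (b ^ 2 - 4 * a * c) then (Fintype.card F : ℂ) - 1
      else -(Fintype.card F : ℂ) - 1 := by
  have hF : ringChar F ≠ 2 := by
    intro h
    have := FiniteField.even_card_of_char_two h
    rcases hq with ⟨m, hm⟩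
    omega
  have h2 : (2 : F) ≠ 0 := Ring.two_ne_zero hF
  have h4 : (4 : F) ≠ 0 := by
    have : (4 : F) = 2 * 2 := by norm_num
    rw [this]; exact mul_ne_zero h2 h2
  have hq0 : (Fintype.card F : ℂ) ≠ 0 := by
    exact_mod_cast Nat.cast_ne_zero.mpr Fintype.card_ne_zero
  set q : ℂ := (Fintype.card F : ℂ) with hqdef
  set χ : MulChar F ℂ := qchar F with hχdef
  set g : ℂ := gaussSum χ ψ with hgdef
  have hχ1 : χ ≠ 1 :=
    (MulChar.ringHomComp_ne_one_iff (RingHom.injective_int _)).mpr (quadraticChar_ne_one hF)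
  have hχ2 : MulChar.IsQuadratic χ := (quadraticChar_isQuadratic F).comp _
  have hg2 : g ^ 2 = χ (-1) * q :=
    gaussSum_sq hχ1 hχ2 (AddChar.IsPrimitive.of_ne_one hψ)
  -- T : the sum without the nonzero restriction
  set T : ℂ := ∑ x : F, ∑ y : F, ∑ z : F,
      (if y ^ 2 = x * z then ψ (-(a * x) - b * y - c * z) else 0) with hTdef
  -- Step A : LHS = T - 1
  have stepA : (∑ x : F, ∑ y : F, ∑ z : F,
      if y ^ 2 = x * z ∧ (x, y, z) ≠ ((0 : F), (0 : F), (0 : F))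
      then ψ (-(a * x) - b * y - c * z) else 0) = T - 1 := by
    have hpt : ∀ x y z : F,
        (if y ^ 2 = x * z ∧ (x, y, z) ≠ ((0 : F), (0 : F), (0 : F))
          then ψ (-(a * x) - b * y - c * z) else 0)
        = (if y ^ 2 = x * z then ψ (-(a * x) - b * y - c * z) else 0)
          - (if x = 0 ∧ y = 0 ∧ z = 0 then (1 : ℂ) else 0) := by
      intro x y z
      by_cases hxyz : x = 0 ∧ y = 0 ∧ z = 0
      · obtain ⟨rfl, rfl, rfl⟩ := hxyz
        simp
      · have hne : (x, y, z) ≠ ((0 : F), (0 : F), (0 : F)) := by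
          simp only [ne_eq, Prod.mk.injEq, not_and]
          intro hx hy; exact fun hz => hxyz ⟨hx, hy, hz⟩
        simp [hne, hxyz]
    simp_rw [hpt, Finset.sum_sub_distrib]
    rw [hTdef]
    congr 1
    simp [ite_and, Finset.sum_ite_eq']
  rw [stepA]
  -- Step B : indicator via characters; per-point identity
  have hind : ∀ s t : F, (if t = 0 then ψ s else 0)
      = q⁻¹ * ∑ u : F, ψ (u * t + s) := by
    intro s t
    have : ∀ u : F, ψ (u * t + s) = ψ (t * u) * ψ s := by
      intro u; rw [AddChar.map_add_eq_mul, mul_comm u t]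
    simp_rw [this, ← Finset.sum_mul, sum_lin ψ hψ t]
    split_ifs with h
    · field_simp; rfl
    · simp
  have hTsum : T = q⁻¹ * ∑ u : F, ∑ x : F, ∑ y : F, ∑ z : F,
      ψ (u * (y ^ 2 - x * z) + (-(a * x) - b * y - c * z)) := by
    rw [hTdef]
    have hpt : ∀ x y z : F,
        (if y ^ 2 = x * z then ψ (-(a * x) - b * y - c * z) else 0)
        = q⁻¹ * ∑ u : F, ψ (u * (y ^ 2 - x * z) + (-(a * x) - b * y - c * z)) := by
      intro x y z
      rw [← hind (-(a * x) - b * y - c * z) (y ^ 2 - x * z)]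
      by_cases h : y ^ 2 = x * z
      · rw [if_pos h, if_pos (sub_eq_zero.mpr h)]
      · rw [if_neg h, if_neg fun hc => h (sub_eq_zero.mp hc)]
    simp_rw [hpt, ← Finset.mul_sum]
    refine congrArg (fun w => q⁻¹ * w) ?_
    calc ∑ x : F, ∑ y : F, ∑ z : F, ∑ u : F,
          ψ (u * (y ^ 2 - x * z) + (-(a * x) - b * y - c * z))
        = ∑ x : F, ∑ y : F, ∑ u : F, ∑ z : F,
            ψ (u * (y ^ 2 - x * z) + (-(a * x) - b * y - c * z)) :=
          Finset.sum_congr rfl fun x _ => Finset.sum_congr rfl fun y _ => Finset.sum_comm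
      _ = ∑ x : F, ∑ u : F, ∑ y : F, ∑ z : F,
            ψ (u * (y ^ 2 - x * z) + (-(a * x) - b * y - c * z)) :=
          Finset.sum_congr rfl fun x _ => Finset.sum_comm
      _ = ∑ u : F, ∑ x : F, ∑ y : F, ∑ z : F,
            ψ (u * (y ^ 2 - x * z) + (-(a * x) - b * y - c * z)) := Finset.sum_comm
  -- Step C : evaluate inner sums for each u
  have hinner : ∀ u : F, (∑ x : F, ∑ y : F, ∑ z : F,
      ψ (u * (y ^ 2 - x * z) + (-(a * x) - b * y - c * z)))
      = (∑ y : F, ψ (u * y ^ 2 - b * y)) *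
        (∑ x : F, ψ (-(a * x)) * (if u * x + c = 0 then q else 0)) := by
    intro u
    have hpt : ∀ x y z : F, ψ (u * (y ^ 2 - x * z) + (-(a * x) - b * y - c * z))
        = ψ (u * y ^ 2 - b * y) * (ψ (-(a * x)) * ψ (-((u * x + c) * z))) := by
      intro x y z
      rw [← AddChar.map_add_eq_mul, ← AddChar.map_add_eq_mul]
      congr 1
      ring
    have step1 : ∀ x y : F, (∑ z : F, ψ (u * (y ^ 2 - x * z) + (-(a * x) - b * y - c * z)))
        = ψ (u * y ^ 2 - b * y) * (ψ (-(a * x)) * (if u * x + c = 0 then q else 0)) := by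
      intro x y
      simp_rw [hpt x y]
      rw [← Finset.mul_sum, ← Finset.mul_sum]
      congr 2
      have harg : ∀ z : F, ψ (-((u * x + c) * z)) = ψ ((-(u * x + c)) * z) := by
        intro z; congr 1; ring
      simp_rw [harg, sum_lin ψ hψ (-(u * x + c)), neg_eq_zero]; rfl
    calc (∑ x : F, ∑ y : F, ∑ z : F,
          ψ (u * (y ^ 2 - x * z) + (-(a * x) - b * y - c * z)))
        = ∑ x : F, ∑ y : F,
            ψ (u * y ^ 2 - b * y) * (ψ (-(a * x)) * (if u * x + c = 0 then q else 0)) :=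
          Finset.sum_congr rfl fun x _ => Finset.sum_congr rfl fun y _ => step1 x y
      _ = ∑ x : F, (∑ y : F, ψ (u * y ^ 2 - b * y)) *
            (ψ (-(a * x)) * (if u * x + c = 0 then q else 0)) :=
          Finset.sum_congr rfl fun x _ => by rw [← Finset.sum_mul]
      _ = (∑ y : F, ψ (u * y ^ 2 - b * y)) *
            (∑ x : F, ψ (-(a * x)) * (if u * x + c = 0 then q else 0)) := by
          rw [← Finset.mul_sum]
  -- the u = 0 term
  have hzero : (∑ y : F, ψ ((0:F) * y ^ 2 - b * y)) *
      (∑ x : F, ψ (-(a * x)) * (if (0:F) * x + c = 0 then q else 0))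
      = if a = 0 ∧ b = 0 ∧ c = 0 then q ^ 3 else 0 := by
    have e1 : ∀ y : F, (0:F) * y ^ 2 - b * y = (-b) * y := fun y => by ring
    have e2 : ∀ x : F, -(a * x) = (-a) * x := fun x => by ring
    have e3 : ∀ x : F, ((0:F) * x + c = 0) = (c = 0) := fun x => by rw [zero_mul, zero_add]
    simp_rw [e1, e2, e3]
    rw [← Finset.sum_mul, sum_lin ψ hψ (-b), sum_lin ψ hψ (-a), neg_eq_zero, neg_eq_zero]
    by_cases ha : a = 0 <;> by_cases hb : b = 0 <;> by_cases hc : c = 0 <;>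
      simp [ha, hb, hc] <;> ring
  -- the u ≠ 0 terms
  set k : F := -(b ^ 2 - 4 * a * c) / 4 with hkdef
  have hne : ∀ u : F, u ≠ 0 →
      (∑ y : F, ψ (u * y ^ 2 - b * y)) *
        (∑ x : F, ψ (-(a * x)) * (if u * x + c = 0 then q else 0))
      = q * (g * (χ u * ψ (k * u⁻¹))) := by
    intro u hu
    have hcond : ∀ x : F, (u * x + c = 0) = (x = -(c / u)) := by
      intro x
      refine propext ⟨fun h => ?_, fun h => ?_⟩
      · field_simp
        linear_combination h
      · rw [h]; field_simp; ring
    have hsx : (∑ x : F, ψ (-(a * x)) * (if u * x + c = 0 then q else 0))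
        = ψ (-(a * -(c / u))) * q := by
      simp_rw [hcond, mul_ite, mul_zero]
      rw [Finset.sum_ite_eq' univ (-(c / u)) (fun x => ψ (-(a * x)) * q)]
      simp
    rw [hsx, sum_quad_lin hF ψ hψ u b hu]
    have hargs : ψ (-(b ^ 2) / (4 * u)) * ψ (-(a * -(c / u))) = ψ (k * u⁻¹) := by
      rw [← AddChar.map_add_eq_mul]
      congr 1
      rw [hkdef]
      field_simp
      ring
    calc ψ (-(b ^ 2) / (4 * u)) * (qchar F u * g) * (ψ (-(a * -(c / u))) * q)
        = q * ((qchar F u * g) * (ψ (-(b ^ 2) / (4 * u)) * ψ (-(a * -(c / u))))) := by ring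
      _ = q * (g * (χ u * ψ (k * u⁻¹))) := by rw [hargs]; ring
  -- assemble T
  have hT : T = (if a = 0 ∧ b = 0 ∧ c = 0 then q ^ 2 else 0)
      + g * (∑ u ∈ univ.erase (0 : F), χ u * ψ (k * u⁻¹)) := by
    rw [hTsum]
    simp_rw [hinner]
    rw [← Finset.add_sum_erase _ _ (mem_univ (0 : F))]
    rw [hzero]
    have hrest : (∑ u ∈ univ.erase (0 : F),
        (∑ y : F, ψ (u * y ^ 2 - b * y)) *
          (∑ x : F, ψ (-(a * x)) * (if u * x + c = 0 then q else 0)))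
        = q * (g * ∑ u ∈ univ.erase (0 : F), χ u * ψ (k * u⁻¹)) := by
      rw [Finset.mul_sum, Finset.mul_sum]
      refine Finset.sum_congr rfl fun u hu => ?_
      exact hne u (Finset.mem_erase.mp hu).1
    rw [hrest, mul_add]
    congr 1
    · split_ifs with h
      · field_simp
      · rw [mul_zero]
    · rw [← mul_assoc, inv_mul_cancel₀ hq0, one_mul]
  rw [hT]
  -- evaluate W := ∑_{u ≠ 0} χ u ψ (k u⁻¹)
  have hWext : (∑ u ∈ univ.erase (0 : F), χ u * ψ (k * u⁻¹))
      = ∑ u : F, χ u * ψ (k * u⁻¹) := by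
    refine Finset.sum_erase _ ?_
    rw [hχdef, qchar_apply, quadraticChar_zero]
    simp
  have hWinv : (∑ u : F, χ u * ψ (k * u⁻¹)) = ∑ u : F, χ u * ψ (k * u) := by
    refine Fintype.sum_equiv (Equiv.inv F) _ _ fun u => ?_
    simp only [Equiv.inv_apply]
    rw [hχdef, qchar_inv]
  have hW0 : k = 0 → (∑ u ∈ univ.erase (0 : F), χ u * ψ (k * u⁻¹)) = 0 := by
    intro hk
    rw [hWext, hWinv, hk]
    simp only [zero_mul, AddChar.map_zero_eq_one, mul_one]
    exact MulChar.sum_eq_zero_of_ne_one hχ1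
  have hWk : k ≠ 0 → (∑ u ∈ univ.erase (0 : F), χ u * ψ (k * u⁻¹)) = χ k * g := by
    intro hk
    rw [hWext, hWinv]
    have : (∑ u : F, χ u * ψ (k * u)) = gaussSum (qchar F) (ψ.mulShift k) := by
      rw [gaussSum]
      exact Finset.sum_congr rfl fun u _ => rfl
    rw [this, gauss_shift ψ k hk]
  -- χ of the discriminant
  have hDk : ∀ hD : b ^ 2 - 4 * a * c ≠ 0, χ k * (χ (-1) * q) = χ (b ^ 2 - 4 * a * c) * q := by
    intro hD
    have hk4 : k = (-1) * ((b ^ 2 - 4 * a * c) * (4 : F)⁻¹) := by rw [hkdef]; field_simp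
    have h4inv : χ ((4 : F)⁻¹) = 1 := by
      have h42 : ((4 : F)⁻¹) = (2 : F)⁻¹ * (2 : F)⁻¹ := by
        rw [← mul_inv]; norm_num
      rw [h42, map_mul, hχdef, qchar_sq _ (inv_ne_zero h2)]
    have hm1 : χ (-1) * χ (-1) = 1 := by
      rw [hχdef]; exact qchar_sq (-1) (by simp)
    rw [hk4, map_mul, map_mul, h4inv]
    calc χ (-1) * (χ (b ^ 2 - 4 * a * c) * 1) * (χ (-1) * q)
        = (χ (-1) * χ (-1)) * (χ (b ^ 2 - 4 * a * c) * q) := by ring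
      _ = χ (b ^ 2 - 4 * a * c) * q := by rw [hm1]; ring
  -- final case analysis
  by_cases habc : a = 0 ∧ b = 0 ∧ c = 0
  · obtain ⟨rfl, rfl, rfl⟩ := habc
    have hk : k = 0 := by rw [hkdef]; ring_nf
    rw [hW0 hk]
    simp
  · rw [if_neg habc, if_neg habc]
    by_cases hD : b ^ 2 - 4 * a * c = 0
    · have hk : k = 0 := by rw [hkdef, hD]; ring_nf
      have hac : (a, c) ≠ ((0 : F), (0 : F)) := by
        intro h
        have ha : a = 0 := congrArg Prod.fst h
        have hc : c = 0 := congrArg Prod.snd h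
        have hb : b = 0 := by
          have : b ^ 2 = 0 := by rw [← hD, ha, hc]; ring
          exact pow_eq_zero_iff (n := 2) (by norm_num) |>.mp this
        exact habc ⟨ha, hb, hc⟩
      rw [if_pos ⟨hD, hac⟩, hW0 hk]
      simp
    · have hk : k ≠ 0 := by
        rw [hkdef]
        exact div_ne_zero (neg_ne_zero.mpr hD) h4
      rw [if_neg (by tauto : ¬(b ^ 2 - 4 * a * c = 0 ∧ (a, c) ≠ ((0 : F), (0 : F))))]
      rw [hWk hk]
      have hgg : g * (χ k * g) = χ (b ^ 2 - 4 * a * c) * q := by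
        calc g * (χ k * g) = χ k * g ^ 2 := by ring
          _ = χ k * (χ (-1) * q) := by rw [hg2]
          _ = χ (b ^ 2 - 4 * a * c) * q := hDk hD
      rw [hgg]
      by_cases hsq : IsSquare (b ^ 2 - 4 * a * c)
      · rw [if_pos hsq]
        have : χ (b ^ 2 - 4 * a * c) = 1 := by
          rw [hχdef, qchar_apply, (quadraticChar_one_iff_isSquare hD).mpr hsq]
          norm_num
        rw [this]; ring
      · rw [if_neg hsq]
        have : χ (b ^ 2 - 4 * a * c) = -1 := by
          rw [hχdef, qchar_apply, quadraticChar_neg_one_iff_not_isSquare.mpr hsq]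
          norm_num
        rw [this]; ring
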